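/- Let Δ be an abstract simplicial complex on [m] and A_Δ the associated configuration matrix of the hierarchical model. Then the row space of A_Δ equals Σ_{F∈Δ} N_F and the kernel of A_Δ equals Σ_{F∉Δ} N_F, where the sums are spans of the mutually orthogonal incremental subspaces N_F. -/

import Mathlib

open Finset

namespace Hier

variable {m : ℕ}

abbrev Cell (I : Fin m → ℕ) := ∀ j, Fin (I j)

variable (I : Fin m → ℕ)

/-- standard inner product on ℚ^I -/
def dot (x y : Cell I → ℚ) : ℚ := ∑ i, x i * y i

/-- L_E: tables depending only on the coordinates in E -/
def LL (E : Finset (Fin m)) : Submodule ℚ (Cell I → ℚ) where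
  carrier := {x | ∀ i i' : Cell I, (∀ j ∈ E, i j = i' j) → x i = x i'}
  zero_mem' := by intro i i' _; rfl
  add_mem' := by
    intro a b ha hb i i' h
    simp only [Pi.add_apply, ha i i' h, hb i i' h]
  smul_mem' := by
    intro c a ha i i' h
    simp only [Pi.smul_apply, ha i i' h]

/-- orthogonal complement w.r.t. the standard inner product -/
def perp (S : Submodule ℚ (Cell I → ℚ)) : Submodule ℚ (Cell I → ℚ) where
  carrier := {y | ∀ x ∈ S, dot I x y = 0}
  zero_mem' := by intro x hx; simp [dot]
  add_mem' := by
    intro a b ha hb x hx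
    have h1 := ha x hx
    have h2 := hb x hx
    simp only [dot, Pi.add_apply, mul_add, Finset.sum_add_distrib] at *
    rw [h1, h2]; ring
  smul_mem' := by
    intro c a ha x hx
    have h1 := ha x hx
    simp only [dot, Pi.smul_apply, smul_eq_mul] at *
    calc ∑ i, x i * (c * a i) = c * ∑ i, x i * a i := by
          rw [Finset.mul_sum]; congr 1; funext i; ring
      _ = 0 := by rw [h1]; ring

/-- incremental subspace N_E -/
def NN (E : Finset (Fin m)) : Submodule ℚ (Cell I → ℚ) :=
  LL I E ⊓ perp I (⨆ j ∈ E, LL I (E.erase j))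

/-- F-marginal of x evaluated at the marginal cell i_F -/
def marg (x : Cell I → ℚ) (F : Finset (Fin m)) (i : Cell I) : ℚ :=
  ∑ j : Cell I, if ∀ k ∈ F, j k = i k then x j else 0

/-- kernel of the configuration determined by a family of facets:
tables all of whose F-marginals vanish, F ∈ Fs -/
def kern (Fs : Finset (Finset (Fin m))) : Submodule ℚ (Cell I → ℚ) where
  carrier := {y | ∀ F ∈ Fs, ∀ i, marg I y F i = 0}
  zero_mem' := by intro F hF i; simp [marg]
  add_mem' := by
    intro a b ha hb F hF i
    have h1 := ha F hF i
    have h2 := hb F hF i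
    simp only [marg, Pi.add_apply] at *
    have key : (∑ j : Cell I, if ∀ k ∈ F, j k = i k then a j + b j else 0)
        = (∑ j : Cell I, if ∀ k ∈ F, j k = i k then a j else 0)
          + (∑ j : Cell I, if ∀ k ∈ F, j k = i k then b j else 0) := by
      rw [← Finset.sum_add_distrib]
      apply Finset.sum_congr rfl
      intro j _
      split <;> simp
    rw [key, h1, h2]; ring
  smul_mem' := by
    intro c a ha F hF i
    have h1 := ha F hF i
    simp only [marg, Pi.smul_apply, smul_eq_mul] at *
    calc ∑ j : Cell I, (if ∀ k ∈ F, j k = i k then c * a j else 0)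
        = c * ∑ j : Cell I, (if ∀ k ∈ F, j k = i k then a j else 0) := by
          rw [Finset.mul_sum]; congr 1; funext j; split <;> simp
      _ = 0 := by rw [h1]; ring

/-- a (finite) abstract simplicial complex on [m] -/
def IsComplex (Δ : Finset (Finset (Fin m))) : Prop :=
  ∀ F ∈ Δ, ∀ F' ⊆ F, F' ∈ Δ

/-- the maximal elements (facets) of Δ -/
def facets (Δ : Finset (Finset (Fin m))) : Finset (Finset (Fin m)) :=
  Δ.filter (fun D => ∀ F ∈ Δ, D ⊆ F → F = D)

/-- row space of the hierarchical-model configuration A_Δ -/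
def rowsp (Δ : Finset (Finset (Fin m))) : Submodule ℚ (Cell I → ℚ) :=
  ⨆ D ∈ facets Δ, LL I D

/-- single partial difference operator ∂_j -/
def pd1 (hI : ∀ j, 0 < I j) (j : Fin m) (x : Cell I → ℚ) : Cell I → ℚ :=
  fun i => x i - x (Function.update i j ⟨0, hI j⟩)

/-- ∂_E: composition of the (commuting) ∂_j, j ∈ E -/
noncomputable def pdE (hI : ∀ j, 0 < I j) (E : Finset (Fin m)) : (Cell I → ℚ) → (Cell I → ℚ) :=
  E.toList.foldr (fun j f => pd1 I hI j ∘ f) id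


/-! ### Auxiliary lemmas -/

lemma dot_comm' (x y : Cell I → ℚ) : dot I x y = dot I y x :=
  Finset.sum_congr rfl fun i _ => mul_comm _ _

lemma dot_self_eq_zero {x : Cell I → ℚ} (h : dot I x x = 0) : x = 0 := by
  funext i
  have hn : ∀ j ∈ (univ : Finset (Cell I)), (0:ℚ) ≤ x j * x j := fun j _ => mul_self_nonneg _
  have := (Finset.sum_eq_zero_iff_of_nonneg hn).mp h i (mem_univ i)
  simpa using mul_self_eq_zero.mp this

/-- the standard bilinear form packaged for mathlib's API -/
def Bform : LinearMap.BilinForm ℚ (Cell I → ℚ) :=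
  LinearMap.mk₂ ℚ (dot I)
    (fun x x' y => by
      simp only [dot, Pi.add_apply, add_mul]
      rw [Finset.sum_add_distrib])
    (fun c x y => by
      simp only [dot, Pi.smul_apply, smul_eq_mul, Finset.mul_sum]
      exact Finset.sum_congr rfl fun i _ => by ring)
    (fun x y y' => by
      simp only [dot, Pi.add_apply, mul_add]
      rw [Finset.sum_add_distrib])
    (fun c x y => by
      simp only [dot, Pi.smul_apply, smul_eq_mul, Finset.mul_sum]
      exact Finset.sum_congr rfl fun i _ => by ring)

@[simp] lemma Bform_apply (x y : Cell I → ℚ) : Bform I x y = dot I x y := rfl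

lemma Bform_isRefl : (Bform I).IsRefl := by
  intro x y h
  simpa [dot_comm' I y x] using h

lemma perp_eq_orthogonal (S : Submodule ℚ (Cell I → ℚ)) :
    perp I S = (Bform I).orthogonal S := by
  ext y
  constructor
  · intro h x hx
    exact h x hx
  · intro h x hx
    exact h x hx

lemma restrict_nondeg (W : Submodule ℚ (Cell I → ℚ)) :
    ((Bform I).restrict W).Nondegenerate := by
  refine ⟨?_, ?_⟩ <;>
  · rintro ⟨w, hw⟩ h
    have h0 : dot I w w = 0 := h ⟨w, hw⟩
    exact Subtype.ext (dot_self_eq_zero I h0)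

lemma exists_proj (W : Submodule ℚ (Cell I → ℚ)) (x : Cell I → ℚ) :
    ∃ a ∈ W, x - a ∈ perp I W := by
  have hc := LinearMap.BilinForm.isCompl_orthogonal_of_restrict_nondegenerate
    (B := Bform I) (W := W) (Bform_isRefl I) (restrict_nondeg I W)
  have hx : x ∈ W ⊔ (Bform I).orthogonal W := by rw [hc.sup_eq_top]; trivial
  obtain ⟨a, ha, b, hb, hab⟩ := Submodule.mem_sup.mp hx
  refine ⟨a, ha, ?_⟩
  rw [perp_eq_orthogonal]
  have : x - a = b := by rw [← hab]; ring
  rw [this]; exact hb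

lemma mem_perp_iff_le_ker {y : Cell I → ℚ} {S : Submodule ℚ (Cell I → ℚ)} :
    y ∈ perp I S ↔ S ≤ LinearMap.ker ((Bform I).flip y) := by
  constructor
  · intro h x hx
    simpa [LinearMap.mem_ker] using h x hx
  · intro h x hx
    simpa [LinearMap.mem_ker] using h hx

lemma LL_mono {E E' : Finset (Fin m)} (h : E ⊆ E') : LL I E ≤ LL I E' :=
  fun x hx i i' hagree => hx i i' fun j hj => hagree j (h hj)

lemma mem_LL_univ (x : Cell I → ℚ) : x ∈ LL I (univ : Finset (Fin m)) := by
  intro i i' h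
  have : i = i' := funext fun j => h j (mem_univ j)
  rw [this]

lemma marg_eq_dot (y : Cell I → ℚ) (F : Finset (Fin m)) (c : Cell I) :
    marg I y F c = dot I (fun j => if ∀ k ∈ F, j k = c k then (1:ℚ) else 0) y := by
  unfold marg dot
  refine Finset.sum_congr rfl fun j _ => ?_
  by_cases h : ∀ k ∈ F, j k = c k <;> simp [h]

lemma ind_mem_LL (F : Finset (Fin m)) (c : Cell I) :
    (fun j => if ∀ k ∈ F, j k = c k then (1:ℚ) else 0) ∈ LL I F := by
  intro i i' h
  have hiff : (∀ k ∈ F, i k = c k) ↔ (∀ k ∈ F, i' k = c k) := by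
    constructor <;> intro hh k hk
    · rw [← h k hk]; exact hh k hk
    · rw [h k hk]; exact hh k hk
  exact if_congr hiff rfl rfl

lemma dot_eq_zero_of_marg (hI0 : ∀ j, 0 < I j) {D : Finset (Fin m)} {x y : Cell I → ℚ}
    (hx : x ∈ LL I D) (hy : ∀ i, marg I y D i = 0) : dot I x y = 0 := by
  classical
  set i₀ : Cell I := fun j => ⟨0, hI0 j⟩ with hi₀
  set φ : Cell I → Cell I := fun i k => if k ∈ D then i k else i₀ k with hφ
  have hmap : ∀ i ∈ (univ : Finset (Cell I)), φ i ∈ (univ : Finset (Cell I)) :=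
    fun _ _ => mem_univ _
  rw [dot, ← Finset.sum_fiberwise_of_maps_to hmap (fun i => x i * y i)]
  apply Finset.sum_eq_zero
  intro c _
  have hfib : ∀ i ∈ univ.filter (fun i => φ i = c), x i = x c := by
    intro i hi
    have hic : φ i = c := (Finset.mem_filter.mp hi).2
    refine hx i c fun k hk => ?_
    rw [← hic]; simp [hφ, hk]
  calc (∑ i ∈ univ.filter (fun i => φ i = c), x i * y i)
      = ∑ i ∈ univ.filter (fun i => φ i = c), x c * y i :=
        Finset.sum_congr rfl fun i hi => by rw [hfib i hi]
    _ = x c * ∑ i ∈ univ.filter (fun i => φ i = c), y i := by rw [Finset.mul_sum]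
    _ = 0 := by
        by_cases hc : ∀ k, k ∉ D → c k = i₀ k
        · have hset : univ.filter (fun i => φ i = c)
              = univ.filter (fun i => ∀ k ∈ D, i k = c k) := by
            ext i
            simp only [mem_filter, mem_univ, true_and]
            constructor
            · intro h k hk; rw [← h]; simp [hφ, hk]
            · intro h
              funext k
              by_cases hk : k ∈ D
              · simpa [hφ, hk] using h k hk
              · simpa [hφ, hk] using (hc k hk).symm
          rw [hset]
          have hm : ∑ i ∈ univ.filter (fun i => ∀ k ∈ D, i k = c k), y i = marg I y D c := by
            rw [marg, Finset.sum_filter]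
          rw [hm, hy c, mul_zero]
        · have hset : univ.filter (fun i => φ i = c) = ∅ := by
            ext i
            simp only [mem_filter, mem_univ, true_and, Finset.notMem_empty, iff_false]
            intro h
            push_neg at hc
            obtain ⟨k, hk, hck⟩ := hc
            apply hck
            rw [← h]; simp [hφ, hk]
          rw [hset, Finset.sum_empty, mul_zero]

/-- key orthogonality step: if `j ∈ E`, `j ∉ E'`, `x ∈ N_E`, `y ∈ L_{E'}`, then `x ⊥ y`. -/
lemma dot_zero_aux (hI0 : ∀ j, 0 < I j) {E E' : Finset (Fin m)} {j : Fin m}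
    (hjE : j ∈ E) (hjE' : j ∉ E') {x y : Cell I → ℚ}
    (hx : x ∈ NN I E) (hy : y ∈ LL I E') : dot I x y = 0 := by
  classical
  obtain ⟨hx1, hx2⟩ := hx
  -- the E-marginal of y
  set z : Cell I → ℚ := fun i => ∑ i' : Cell I, if ∀ k ∈ E, i' k = i k then y i' else 0 with hzdef
  -- z belongs to L_{E.erase j}
  have hz : z ∈ LL I (E.erase j) := by
    intro i i'' hagree
    simp only [hzdef]
    rw [← Finset.sum_filter, ← Finset.sum_filter]
    refine Finset.sum_bij' (fun i' _ => Function.update i' j (i'' j))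
      (fun i' _ => Function.update i' j (i j)) ?_ ?_ ?_ ?_ ?_
    · intro a ha
      simp only [mem_filter, mem_univ, true_and] at ha ⊢
      intro k hk
      by_cases hkj : k = j
      · subst hkj; simp
      · rw [Function.update_of_ne hkj]
        rw [ha k hk]
        exact hagree k (Finset.mem_erase.mpr ⟨hkj, hk⟩)
    · intro a ha
      simp only [mem_filter, mem_univ, true_and] at ha ⊢
      intro k hk
      by_cases hkj : k = j
      · subst hkj; simp
      · rw [Function.update_of_ne hkj]
        rw [ha k hk]
        exact (hagree k (Finset.mem_erase.mpr ⟨hkj, hk⟩)).symm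
    · intro a ha
      simp only [mem_filter, mem_univ, true_and] at ha
      show Function.update (Function.update a j (i'' j)) j (i j) = a
      rw [Function.update_idem]
      have : a j = i j := ha j hjE
      rw [← this, Function.update_eq_self]
    · intro a ha
      simp only [mem_filter, mem_univ, true_and] at ha
      show Function.update (Function.update a j (i j)) j (i'' j) = a
      rw [Function.update_idem]
      have : a j = i'' j := ha j hjE
      rw [← this, Function.update_eq_self]
    · intro a _
      refine hy a (Function.update a j (i'' j)) fun k hk => ?_
      have hkj : k ≠ j := fun h => hjE' (h ▸ hk)
      rw [Function.update_of_ne hkj]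
  -- x ⊥ z
  have hxz : dot I z x = 0 := by
    refine hx2 z ?_
    have hle : LL I (E.erase j) ≤ ⨆ k ∈ E, LL I (E.erase k) :=
      le_iSup₂ (f := fun k (_ : k ∈ E) => LL I (E.erase k)) j hjE
    exact hle hz
  -- the fiber cardinality is constant
  set c : Cell I → ℕ := fun i' => (univ.filter (fun i : Cell I => ∀ k ∈ E, i' k = i k)).card
    with hcdef
  have hconst : ∀ i' i'' : Cell I, c i' = c i'' := by
    intro i' i''
    refine Finset.card_bij' (fun a _ => fun k => if k ∈ E then i'' k else a k)
      (fun a _ => fun k => if k ∈ E then i' k else a k) ?_ ?_ ?_ ?_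
    · intro a _
      simp only [mem_filter, mem_univ, true_and]
      intro k hk; simp [hk]
    · intro a _
      simp only [mem_filter, mem_univ, true_and]
      intro k hk; simp [hk]
    · intro a ha
      simp only [mem_filter, mem_univ, true_and] at ha
      funext k
      by_cases hk : k ∈ E
      · simpa [hk] using ha k hk
      · simp [hk]
    · intro a ha
      simp only [mem_filter, mem_univ, true_and] at ha
      funext k
      by_cases hk : k ∈ E
      · simpa [hk] using ha k hk
      · simp [hk]
  set i₀ : Cell I := fun j => ⟨0, hI0 j⟩ with hi₀
  have hcpos : 0 < c i₀ := by
    rw [hcdef]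
    refine Finset.card_pos.mpr ⟨i₀, ?_⟩
    simp only [mem_filter, mem_univ, true_and]
    intro k _; trivial
  -- compute dot z x
  have hcomp : dot I z x = (c i₀ : ℚ) * dot I x y := by
    rw [dot]
    simp only [hzdef]
    calc (∑ i : Cell I, (∑ i' : Cell I, if ∀ k ∈ E, i' k = i k then y i' else 0) * x i)
        = ∑ i : Cell I, ∑ i' : Cell I, (if ∀ k ∈ E, i' k = i k then y i' * x i else 0) := by
          refine Finset.sum_congr rfl fun i _ => ?_
          rw [Finset.sum_mul]
          refine Finset.sum_congr rfl fun i' _ => ?_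
          by_cases h : ∀ k ∈ E, i' k = i k <;> simp [h]
      _ = ∑ i' : Cell I, ∑ i : Cell I, (if ∀ k ∈ E, i' k = i k then y i' * x i else 0) :=
          Finset.sum_comm
      _ = ∑ i' : Cell I, (c i' : ℚ) * (x i' * y i') := by
          refine Finset.sum_congr rfl fun i' _ => ?_
          rw [← Finset.sum_filter]
          have : ∀ i ∈ univ.filter (fun i : Cell I => ∀ k ∈ E, i' k = i k),
              y i' * x i = x i' * y i' := by
            intro i hi
            simp only [mem_filter, mem_univ, true_and] at hi
            have : x i = x i' := hx1 i i' fun k hk => (hi k hk).symm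
            rw [this]; ring
          rw [Finset.sum_congr rfl this, Finset.sum_const, nsmul_eq_mul]
      _ = ∑ i' : Cell I, (c i₀ : ℚ) * (x i' * y i') :=
          Finset.sum_congr rfl fun i' _ => by rw [hconst i' i₀]
      _ = (c i₀ : ℚ) * dot I x y := by rw [dot, ← Finset.mul_sum]
  rw [hxz] at hcomp
  have hne : (c i₀ : ℚ) ≠ 0 := Nat.cast_ne_zero.mpr (Nat.pos_iff_ne_zero.mp hcpos)
  exact (mul_eq_zero.mp hcomp.symm).resolve_left hne

/-- mutual orthogonality of the incremental subspaces -/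
lemma NN_orth (hI0 : ∀ j, 0 < I j) {E E' : Finset (Fin m)} (hne : E ≠ E')
    {x y : Cell I → ℚ} (hx : x ∈ NN I E) (hy : y ∈ NN I E') : dot I x y = 0 := by
  by_cases h : ∃ j, j ∈ E ∧ j ∉ E'
  · obtain ⟨j, hj1, hj2⟩ := h
    exact dot_zero_aux I hI0 hj1 hj2 hx hy.1
  · push_neg at h
    have hsub : E ⊆ E' := fun j hj => h j hj
    have : ∃ j, j ∈ E' ∧ j ∉ E := by
      by_contra hco
      push_neg at hco
      exact hne (Finset.Subset.antisymm hsub fun j hj => hco j hj)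
    obtain ⟨j, hj1, hj2⟩ := this
    rw [dot_comm']
    exact dot_zero_aux I hI0 hj1 hj2 hy hx.1

/-- decomposition lemma: `L_E ≤ ⨆_{F ⊆ E} N_F`. -/
lemma LL_le_sup_NN (E : Finset (Fin m)) :
    LL I E ≤ ⨆ F ∈ E.powerset, NN I F := by
  induction E using Finset.strongInduction with
  | _ E ih =>
    intro x hx
    obtain ⟨a, haM, hb⟩ := exists_proj I (⨆ j ∈ E, LL I (E.erase j)) x
    have hML : (⨆ j ∈ E, LL I (E.erase j)) ≤ LL I E :=
      iSup₂_le fun j _ => LL_mono I (Finset.erase_subset _ _)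
    have haL : a ∈ LL I E := hML haM
    have hbN : x - a ∈ NN I E := ⟨Submodule.sub_mem _ hx haL, hb⟩
    have hMle : (⨆ j ∈ E, LL I (E.erase j)) ≤ ⨆ F ∈ E.powerset, NN I F := by
      refine iSup₂_le fun j hj => ?_
      refine (ih (E.erase j) (Finset.erase_ssubset hj)).trans ?_
      refine iSup₂_le fun F hF => ?_
      refine le_iSup₂ (f := fun F (_ : F ∈ E.powerset) => NN I F) F ?_
      exact Finset.mem_powerset.mpr ((Finset.mem_powerset.mp hF).trans (Finset.erase_subset _ _))
    have h1 : a ∈ ⨆ F ∈ E.powerset, NN I F := hMle haM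
    have h2 : x - a ∈ ⨆ F ∈ E.powerset, NN I F :=
      (le_iSup₂ (f := fun F (_ : F ∈ E.powerset) => NN I F) E
        (Finset.mem_powerset.mpr (Finset.Subset.refl E))) hbN
    have : x = a + (x - a) := by ring
    rw [this]
    exact Submodule.add_mem _ h1 h2

lemma top_le_sup_NN : (⊤ : Submodule ℚ (Cell I → ℚ)) ≤ ⨆ F : Finset (Fin m), NN I F := by
  intro x _
  have h1 : x ∈ ⨆ F ∈ (univ : Finset (Fin m)).powerset, NN I F :=
    LL_le_sup_NN I univ (mem_LL_univ I x)
  have h2 : (⨆ F ∈ (univ : Finset (Fin m)).powerset, NN I F)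
      ≤ ⨆ F : Finset (Fin m), NN I F :=
    iSup₂_le fun F _ => le_iSup (fun F => NN I F) F
  exact h2 h1

lemma exists_facet {Δ : Finset (Finset (Fin m))} {F : Finset (Fin m)} (hF : F ∈ Δ) :
    ∃ D ∈ facets Δ, F ⊆ D := by
  classical
  have hne : (Δ.filter (fun G => F ⊆ G)).Nonempty := ⟨F, by simp [hF]⟩
  obtain ⟨D, hD, hmax⟩ := Finset.exists_max_image _ (fun G => G.card) hne
  simp only [mem_filter] at hD
  refine ⟨D, ?_, hD.2⟩
  simp only [facets, mem_filter]
  refine ⟨hD.1, fun G hG hDG => ?_⟩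
  have hGF : G ∈ Δ.filter (fun G => F ⊆ G) := by
    simp only [mem_filter]
    exact ⟨hG, hD.2.trans hDG⟩
  exact (Finset.eq_of_subset_of_card_le hDG (hmax G hGF)).symm

lemma kern_eq_perp_rowsp (hI0 : ∀ j, 0 < I j) (Δ : Finset (Finset (Fin m))) :
    kern I (facets Δ) = perp I (rowsp I Δ) := by
  ext y
  constructor
  · intro hy
    refine (mem_perp_iff_le_ker I).mpr ?_
    refine iSup₂_le fun D hD => ?_
    intro x hx
    simp only [LinearMap.mem_ker, LinearMap.flip_apply, Bform_apply]
    exact dot_eq_zero_of_marg I hI0 hx (hy D hD)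
  · intro hy D hD i
    rw [marg_eq_dot]
    refine hy _ ?_
    exact (le_iSup₂ (f := fun D (_ : D ∈ facets Δ) => LL I D) D hD) (ind_mem_LL I D i)

/-- Lemma 2 (4): for a simplicial complex `Δ`, the row space of the configuration `A_Δ`
equals `Σ_{F∈Δ} N_F` and its kernel equals `Σ_{F∉Δ} N_F`. -/
theorem stmt7 (hI : ∀ j, 2 ≤ I j) (Δ : Finset (Finset (Fin m))) (hΔ : IsComplex Δ) :
    rowsp I Δ = (⨆ F ∈ Δ, NN I F) ∧
    kern I (facets Δ) = ⨆ (F : Finset (Fin m)) (_ : F ∉ Δ), NN I F := by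
  classical
  have hI0 : ∀ j, 0 < I j := fun j => lt_of_lt_of_le (by norm_num) (hI j)
  have hfacets_sub : facets Δ ⊆ Δ := Finset.filter_subset _ _
  -- part 1
  have h1 : rowsp I Δ = ⨆ F ∈ Δ, NN I F := by
    apply le_antisymm
    · refine iSup₂_le fun D hD => ?_
      refine (LL_le_sup_NN I D).trans ?_
      refine iSup₂_le fun F hF => ?_
      exact le_iSup₂ (f := fun F (_ : F ∈ Δ) => NN I F) F
        (hΔ D (hfacets_sub hD) F (Finset.mem_powerset.mp hF))
    · refine iSup₂_le fun F hF => ?_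
      obtain ⟨D, hD, hFD⟩ := exists_facet hF
      have : NN I F ≤ LL I D := inf_le_left.trans (LL_mono I hFD)
      exact this.trans (le_iSup₂ (f := fun D (_ : D ∈ facets Δ) => LL I D) D hD)
  refine ⟨h1, ?_⟩
  -- part 2
  set S₁ : Submodule ℚ (Cell I → ℚ) := ⨆ F ∈ Δ, NN I F with hS₁
  set S₂ : Submodule ℚ (Cell I → ℚ) := ⨆ (F : Finset (Fin m)) (_ : F ∉ Δ), NN I F with hS₂
  have hkern : kern I (facets Δ) = perp I S₁ := by
    rw [kern_eq_perp_rowsp I hI0 Δ, h1]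
  have hS₂perp : S₂ ≤ perp I S₁ := by
    refine iSup₂_le fun F hF => ?_
    intro y hy
    refine (mem_perp_iff_le_ker I).mpr ?_
    refine iSup₂_le fun F' hF' => ?_
    intro x hx
    simp only [LinearMap.mem_ker, LinearMap.flip_apply, Bform_apply]
    exact NN_orth I hI0 (fun h : F' = F => hF (h ▸ hF')) hx hy
  rw [hkern]
  apply le_antisymm
  · intro y hy
    have hytop : y ∈ S₁ ⊔ S₂ := by
      have hsplit : (⨆ F : Finset (Fin m), NN I F) ≤ S₁ ⊔ S₂ := by
        refine iSup_le fun F => ?_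
        by_cases hF : F ∈ Δ
        · exact (le_iSup₂ (f := fun F (_ : F ∈ Δ) => NN I F) F hF).trans le_sup_left
        · exact (le_iSup₂ (f := fun F (_ : F ∉ Δ) => NN I F) F hF).trans le_sup_right
      exact hsplit (top_le_sup_NN I (Submodule.mem_top))
    obtain ⟨a, ha, b, hb, hab⟩ := Submodule.mem_sup.mp hytop
    have hbperp : b ∈ perp I S₁ := hS₂perp hb
    have haperp : a ∈ perp I S₁ := by
      have : a = y - b := by rw [← hab]; ring
      rw [this]
      exact Submodule.sub_mem _ hy hbperp
    have ha0 : a = 0 := by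
      apply dot_self_eq_zero I
      exact haperp a ha
    have : y = b := by rw [← hab, ha0, zero_add]
    rw [this]
    exact hb
  · exact hS₂perp


end Hier
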